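/- Suppose M is a real symmetric orthogonal matrix with graph G (off-diagonal zero pattern of M equals adjacency of G). If {u,w} is an edge of G that is not contained in any triangle of G, then the diagonal entries of M satisfy M_{uu} = -M_{ww}. -/
import Mathlib


open Matrix

/-- If `M` is a real symmetric orthogonal matrix whose off-diagonal
zero pattern matches the adjacency of a graph `G`, and `{u,w}` is an edge of `G`
contained in no triangle of `G`, then `M u u = -(M w w)`. -/
theorem stmt_9 {V : Type*} [Fintype V] [DecidableEq V] (G : SimpleGraph V)
    (M : Matrix V V ℝ) (hsymm : M.IsSymm) (horth : M * M = 1)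
    (hpat : ∀ u v : V, u ≠ v → (M u v ≠ 0 ↔ G.Adj u v))
    (u w : V) (huw : G.Adj u w)
    (htri : ∀ t : V, ¬ (G.Adj u t ∧ G.Adj t w)) :
    M u u = -(M w w) := by
  have hne : u ≠ w := huw.ne
  have hentry : ∑ t, M u t * M t w = 0 := by
    have := congrFun (congrFun horth u) w
    rwa [Matrix.mul_apply, Matrix.one_apply_ne hne] at this
  have hsum : ∑ t, M u t * M t w = M u u * M u w + M u w * M w w := by
    rw [Finset.sum_eq_add_of_mem u w (Finset.mem_univ u) (Finset.mem_univ w) hne]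
    intro t _ ht
    by_contra h
    have htu : t ≠ u := fun h' => ht.1 h'
    have htw : t ≠ w := fun h' => ht.2 h'
    have h1 : M u t ≠ 0 := fun h0 => h (by rw [h0, zero_mul])
    have h2 : M t w ≠ 0 := fun h0 => h (by rw [h0, mul_zero])
    exact htri t ⟨(hpat u t (Ne.symm htu)).mp h1, (hpat t w htw).mp h2⟩
  have hMuw : M u w ≠ 0 := (hpat u w hne).mpr huw
  have hsw : M w u = M u w := by
    have := congrFun (congrFun hsymm.eq u) w
    simpa [Matrix.transpose_apply] using this
  rw [hsum] at hentry
  have : M u w * (M u u + M w w) = 0 := by ring_nf; linarith [hentry]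
  have := (mul_eq_zero.mp this).resolve_left hMuw
  linarith
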